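/- Let n, t, m ∈ ℕ with m ≤ n + t, identify length-(n+t) bitstrings with pairs (first m bits, last n+t−m bits), and for j : Fin m → Fin 2 let Π_j be the orthogonal projection on EuclideanSpace ℂ (Fin (n+t) → Fin 2) onto bitstrings whose first m bits equal j. Let ε ∈ [0,1], let f : (Fin n → Fin 2) → (Fin m → Fin 2), and let V be a unitary on EuclideanSpace ℂ (Fin (n+t) → Fin 2) with ‖Π_{f(x)}(V e_{pad(x)})‖² ≥ 1 − ε for every x. Let COPY be the unitary of EuclideanSpace ℂ ((Fin (n+t) → Fin 2) × (Fin m → Fin 2)) permuting standard basis vectors by e_s ⊗ e_z ↦ e_s ⊗ e_{z ⊕ s|_m}, where s|_m is the first m bits of s, and set W = (V⁻¹ ⊗ I) ∘ COPY ∘ (V ⊗ I). Then for every x : Fin n → Fin 2, |⟨e_{pad(x)} ⊗ e_{f(x)}, W(e_{pad(x)} ⊗ e_{0})⟩|² ≥ (1 − ε)², where 0 is the all-zeros string of length m. (The approximate uncomputation bound in the proof of the paper's Lemma 5.14: a circuit computing f with per-input success probability 1 − ε, conjugated around a transversal copy, implements the map x ↦ (x, f(x)) with success probability at least (1 − ε)²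 ≥ 1 − 2ε on every basis input.) -/

import Mathlib

/-- `pad n t x` is the length-`(n+t)` bitstring equal to `x` on the first `n`
coordinates and `0` on the remaining `t`. -/
def pad (n t : ℕ) (x : Fin n → Fin 2) : Fin (n + t) → Fin 2 :=
  fun j => if h : (j : ℕ) < n then x ⟨j, h⟩ else 0

/-- The first `m` bits of a length-`k` bitstring. -/
def takeBits {k : ℕ} (m : ℕ) (hm : m ≤ k) (s : Fin k → Fin 2) : Fin m → Fin 2 :=
  fun j => s (Fin.castLE hm j)

/-- Orthogonal projection onto bitstrings whose first `m` bits equal `j`. -/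
def projBits {k m : ℕ} (hm : m ≤ k) (j : Fin m → Fin 2)
    (v : EuclideanSpace ℂ (Fin k → Fin 2)) : EuclideanSpace ℂ (Fin k → Fin 2) :=
  WithLp.toLp 2 (fun s => if takeBits m hm s = j then v s else 0)

/-- Pure tensor: `(u ⊗ w)(p, q) = u p * w q`. -/
def tens {P Q : Type*} (u : EuclideanSpace ℂ P) (w : EuclideanSpace ℂ Q) :
    EuclideanSpace ℂ (P × Q) :=
  WithLp.toLp 2 (fun p => u p.1 * w p.2)

/-- The transversal-copy unitary: on basis vectors,
`e_s ⊗ e_z ↦ e_s ⊗ e_{z ⊕ s|_m}` where `s|_m` is the first `m` bits of `s`. -/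
def copyOp {k m : ℕ} (hm : m ≤ k)
    (v : EuclideanSpace ℂ ((Fin k → Fin 2) × (Fin m → Fin 2))) :
    EuclideanSpace ℂ ((Fin k → Fin 2) × (Fin m → Fin 2)) :=
  WithLp.toLp 2 (fun p => v (p.1, fun j => p.2 j + takeBits m hm p.1 j))

/-- An operator acting on the first factor of a product register
(`V ⊗ I`). -/
def opTensId {P Q : Type*}
    (V : EuclideanSpace ℂ P → EuclideanSpace ℂ P)
    (v : EuclideanSpace ℂ (P × Q)) : EuclideanSpace ℂ (P × Q) :=
  WithLp.toLp 2 (fun p => V (WithLp.toLp 2 (fun p' => v (p', p.2))) p.1)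

lemma tens_single {P Q : Type*} [DecidableEq P] [DecidableEq Q] (p : P) (q : Q) :
    tens (EuclideanSpace.single p (1:ℂ)) (EuclideanSpace.single q (1:ℂ))
      = EuclideanSpace.single (p, q) (1:ℂ) := by
  ext r
  simp only [tens, EuclideanSpace.single_apply, Prod.ext_iff]
  split_ifs <;> simp_all

/-- Approximate uncomputation bound: a circuit computing `f` with per-input
success probability `1 − ε`, conjugated around a transversal copy, implements
`x ↦ (x, f(x))` with success probability at least `(1 − ε)²` on every basis
input. -/
theorem approximate_uncomputation (n t m : ℕ) (hm : m ≤ n + t)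
    (ε : ℝ) (hε0 : 0 ≤ ε) (hε1 : ε ≤ 1)
    (f : (Fin n → Fin 2) → (Fin m → Fin 2))
    (V : EuclideanSpace ℂ (Fin (n + t) → Fin 2) ≃ₗᵢ[ℂ]
         EuclideanSpace ℂ (Fin (n + t) → Fin 2))
    (hV : ∀ x : Fin n → Fin 2,
      1 - ε ≤ ‖projBits hm (f x) (V (EuclideanSpace.single (pad n t x) 1))‖ ^ 2) :
    ∀ x : Fin n → Fin 2,
      (1 - ε) ^ 2 ≤ ‖(inner ℂ
          (tens (EuclideanSpace.single (pad n t x) 1)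
            (EuclideanSpace.single (f x) 1))
          (opTensId (⇑V.symm) (copyOp hm (opTensId (⇑V)
            (tens (EuclideanSpace.single (pad n t x) 1)
              (EuclideanSpace.single (0 : Fin m → Fin 2) 1))))) : ℂ)‖ ^ 2 := by
  intro x
  set p : Fin (n + t) → Fin 2 := pad n t x with hp
  set ψ : EuclideanSpace ℂ (Fin (n + t) → Fin 2) := V (EuclideanSpace.single p 1) with hψ
  set Pψ : EuclideanSpace ℂ (Fin (n + t) → Fin 2) := projBits hm (f x) ψ with hPψ
  -- Step A : the first `V ⊗ I`
  have hA : opTensId (⇑V)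
      (tens (EuclideanSpace.single p 1) (EuclideanSpace.single (0 : Fin m → Fin 2) 1))
      = WithLp.toLp 2 (fun r : (Fin (n + t) → Fin 2) × (Fin m → Fin 2) =>
          if r.2 = 0 then ψ r.1 else 0) := by
    ext r
    show V (WithLp.toLp 2 fun s => tens (EuclideanSpace.single p 1)
        (EuclideanSpace.single (0 : Fin m → Fin 2) 1) (s, r.2)) r.1 = _
    have harg : (WithLp.toLp 2 fun s => tens (EuclideanSpace.single p 1)
        (EuclideanSpace.single (0 : Fin m → Fin 2) 1) (s, r.2))
        = (EuclideanSpace.single (0 : Fin m → Fin 2) (1:ℂ) r.2) •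
            (EuclideanSpace.single p (1:ℂ) : EuclideanSpace ℂ (Fin (n+t) → Fin 2)) := by
      ext s
      simp [tens, smul_eq_mul, mul_comm]
      split_ifs <;> simp_all [EuclideanSpace.single_apply]
    rw [harg, map_smul]
    simp only [PiLp.smul_apply, smul_eq_mul, EuclideanSpace.single_apply, ← hψ]
    split_ifs <;> simp
  -- Step B : after `COPY`, sliced at `f x`, we get the projection of ψ
  have h2 : ∀ a b : Fin 2, a + b = 0 ↔ b = a := by decide
  have hB : (WithLp.toLp 2 fun s => copyOp hm (opTensId (⇑V)
      (tens (EuclideanSpace.single p 1) (EuclideanSpace.single (0 : Fin m → Fin 2) 1)))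
      (s, f x)) = Pψ := by
    ext s
    simp only [copyOp, hA]
    have hcond : ((fun j => f x j + takeBits m hm s j) = (0 : Fin m → Fin 2))
        ↔ takeBits m hm s = f x := by
      simp only [funext_iff, Pi.zero_apply, h2]
    simp only [hPψ, projBits]
    by_cases h : takeBits m hm s = f x
    · rw [if_pos (hcond.mpr h), if_pos h]
    · rw [if_neg (fun hc => h (hcond.mp hc)), if_neg h]
  -- Step C : the inner product equals ⟪ψ, Pψ⟫
  have key : (inner ℂ
      (tens (EuclideanSpace.single p 1) (EuclideanSpace.single (f x) 1))
      (opTensId (⇑V.symm) (copyOp hm (opTensId (⇑V)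
        (tens (EuclideanSpace.single p 1)
          (EuclideanSpace.single (0 : Fin m → Fin 2) 1))))) : ℂ)
      = ((‖Pψ‖ ^ 2 : ℝ) : ℂ) := by
    rw [tens_single, EuclideanSpace.inner_single_left]
    simp only [map_one, one_mul]
    show V.symm (WithLp.toLp 2 fun s => copyOp hm (opTensId (⇑V)
      (tens (EuclideanSpace.single p 1) (EuclideanSpace.single (0 : Fin m → Fin 2) 1)))
      (s, f x)) p = _
    rw [hB]
    have hval : V.symm Pψ p
        = (inner ℂ (EuclideanSpace.single p (1:ℂ)) (V.symm Pψ) : ℂ) := by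
      rw [EuclideanSpace.inner_single_left]; simp
    rw [hval]
    conv_lhs => rw [show (V.symm Pψ) = V.symm Pψ from rfl]
    rw [← LinearIsometryEquiv.inner_map_map V, LinearIsometryEquiv.apply_symm_apply, ← hψ]
    have hps : (inner ℂ ψ Pψ : ℂ) = inner ℂ Pψ Pψ := by
      rw [PiLp.inner_apply, PiLp.inner_apply]
      refine Finset.sum_congr rfl fun s _ => ?_
      simp only [RCLike.inner_apply, hPψ, projBits]
      split_ifs <;> simp
    rw [hps, inner_self_eq_norm_sq_to_K]; norm_cast
  rw [key]
  have hn : (0:ℝ) ≤ ‖Pψ‖ ^ 2 := by positivity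
  rw [Complex.norm_real, Real.norm_of_nonneg hn]
  exact pow_le_pow_left₀ (by linarith) (hV x) 2
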